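/- arXiv:0905.0615 — 2 statements merged into one kernel-verified Lean document; each statement's English description precedes it below -/
import Mathlib

section
/- For every x ∈ X, the function φ_x = φ(x,·) is a pointwise limit of continuous critical sub-solutions; moreover, for every neighborhood V of x, the approximating continuous critical sub-solutions can be chosen to converge to φ_x uniformly on X ∖ V. -/
open Metric Set Filter Topology

/-- `X` is a `B`-length space at scale `K`. -/
def IsBLengthSpaceAtScale (X : Type*) [MetricSpace X] (B K : ℝ) : Prop :=
  ∀ x y : X, ∃ (n : ℕ) (p : ℕ → X), p 0 = x ∧ p n = y ∧
    (∀ i < n, dist (p i) (p (i + 1)) ≤ K) ∧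
    ∑ i ∈ Finset.range n, dist (p i) (p (i + 1)) ≤ B * dist x y

/-- Uniform superlinearity of the cost `c`. -/
def UniformlySuperlinear {X : Type*} [MetricSpace X] (c : X → X → ℝ) : Prop :=
  ∀ k : ℝ, 0 ≤ k → ∃ C : ℝ, ∀ x y : X, k * dist x y - C ≤ c x y

/-- Uniform boundedness of the cost `c`. -/
def UniformlyBounded {X : Type*} [MetricSpace X] (c : X → X → ℝ) : Prop :=
  ∀ R : ℝ, ∃ A : ℝ, ∀ x y : X, dist x y ≤ R → c x y ≤ A

/-- `u` is `α`-dominated: `u y - u x ≤ c x y + α` for all `x y`. -/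
def Dominated {X : Type*} (c : X → X → ℝ) (α : ℝ) (u : X → ℝ) : Prop :=
  ∀ x y : X, u y - u x ≤ c x y + α

/-- Negative Lax-Oleinik semigroup. -/
noncomputable def Tm {X : Type*} (c : X → X → ℝ) (u : X → ℝ) (x : X) : ℝ :=
  ⨅ y, (u y + c y x)

/-- Positive Lax-Oleinik semigroup. -/
noncomputable def Tp {X : Type*} (c : X → X → ℝ) (u : X → ℝ) (x : X) : ℝ :=
  ⨆ y, (u y - c x y)

/-- The critical constant `α[0]`: the smallest `α` for which `α`-dominated functions exist. -/
noncomputable def critValue {X : Type*} (c : X → X → ℝ) : ℝ :=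
  sInf {α : ℝ | ∃ u : X → ℝ, Dominated c α u}

/-- The Mañé potential `φ(x,y) = sup_u (u y - u x)`, sup over critical sub-solutions. -/
noncomputable def mane {X : Type*} (c : X → X → ℝ) (x y : X) : ℝ :=
  sSup {r : ℝ | ∃ u : X → ℝ, Dominated c (critValue c) u ∧ r = u y - u x}

/-- A bi-infinite sequence is `(u,c,α)`-calibrated if all its finite subchains of
consecutive terms are calibrated. -/
def IsCalibrated {X : Type*} (c : X → X → ℝ) (α : ℝ) (u : X → ℝ) (x : ℤ → X) : Prop :=
  ∀ (m : ℤ) (k : ℕ), u (x (m + k)) =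
    u (x m) + (∑ i ∈ Finset.range k, c (x (m + i)) (x (m + i + 1))) + k * α

/-- The projected Aubry set of a critical sub-solution `u`. -/
def projAubry {X : Type*} (c : X → X → ℝ) (u : X → ℝ) : Set X :=
  {p : X | ∃ x : ℤ → X, IsCalibrated c (critValue c) u x ∧ x 0 = p}

/-- The set `Â_u` of pairs of consecutive terms of calibrated bi-infinite sequences. -/
def aubryPairs {X : Type*} (c : X → X → ℝ) (u : X → ℝ) : Set (X × X) :=
  {q : X × X | ∃ (x : ℤ → X) (n : ℤ),
    IsCalibrated c (critValue c) u x ∧ x n = q.1 ∧ x (n + 1) = q.2}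

/-- The projected Aubry set `A = ∩_u A_u`, intersection over all critical sub-solutions. -/
def projAubrySet {X : Type*} (c : X → X → ℝ) : Set X :=
  {p : X | ∀ u : X → ℝ, Dominated c (critValue c) u → p ∈ projAubry c u}

/-- The Aubry pair set `Â = ∩_u Â_u`, intersection over all critical sub-solutions. -/
def aubryPairsSet {X : Type*} (c : X → X → ℝ) : Set (X × X) :=
  {q : X × X | ∀ u : X → ℝ, Dominated c (critValue c) u → q ∈ aubryPairs c u}

/-- `c_n(x,y)`: infimum of total cost over chains of length `n` from `x` to `y`. -/
noncomputable def cChain {X : Type*} (c : X → X → ℝ) (n : ℕ) (x y : X) : ℝ :=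
  sInf {r : ℝ | ∃ p : ℕ → X, p 0 = x ∧ p n = y ∧
    r = ∑ i ∈ Finset.range n, c (p i) (p (i + 1))}

/-- `φ_n(x,y) = inf_{k ≥ n} (c_k(x,y) + k·α)`. -/
noncomputable def phiN {X : Type*} (c : X → X → ℝ) (α : ℝ) (n : ℕ) (x y : X) : ℝ :=
  sInf {r : ℝ | ∃ k : ℕ, n ≤ k ∧ r = cChain c k x y + k * α}

/-- The Peierls barrier, with values in the extended reals. -/
noncomputable def peierls {X : Type*} (c : X → X → ℝ) (α : ℝ) (x y : X) : EReal :=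
  Filter.liminf (fun n : ℕ => ((cChain c n x y + n * α : ℝ) : EReal)) Filter.atTop

/-- Negative Lax-Oleinik semigroup on extended-real-valued functions. -/
noncomputable def eTm {X : Type*} (c : X → X → ℝ) (u : X → EReal) (x : X) : EReal :=
  ⨅ y, (u y + (c y x : EReal))

/-- Positive Lax-Oleinik semigroup on extended-real-valued functions. -/
noncomputable def eTp {X : Type*} (c : X → X → ℝ) (u : X → EReal) (x : X) : EReal :=
  ⨆ y, (u y - (c x y : EReal))

set_option linter.unusedSectionVars false

section Aux

variable {X : Type*} [MetricSpace X] [Nonempty X] {c : X → X → ℝ}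

lemma dominated_telescope {α : ℝ} {u : X → ℝ} (hu : Dominated c α u) (k : ℕ) (p : ℕ → X) :
    u (p k) - u (p 0) ≤ (∑ i ∈ Finset.range k, c (p i) (p (i + 1))) + k * α := by
  induction k with
  | zero => simp
  | succ n ih =>
    have h := hu (p n) (p (n + 1))
    rw [Finset.sum_range_succ]
    push_cast
    linarith

lemma domSet_nonempty (hsl : UniformlySuperlinear c) :
    {α : ℝ | ∃ u : X → ℝ, Dominated c α u}.Nonempty := by
  obtain ⟨C, hC⟩ := hsl 0 le_rfl
  refine ⟨C, (fun _ => 0), fun a b => ?_⟩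
  have := hC a b
  simp only [zero_mul, zero_sub] at this
  linarith

lemma domSet_bddBelow :
    BddBelow {α : ℝ | ∃ u : X → ℝ, Dominated c α u} := by
  obtain ⟨x₀⟩ := ‹Nonempty X›
  refine ⟨-c x₀ x₀, fun α hα => ?_⟩
  obtain ⟨u, hu⟩ := hα
  have := hu x₀ x₀
  linarith

lemma exists_dominated_gt (hsl : UniformlySuperlinear c) {ε : ℝ} (hε : 0 < ε) :
    ∃ u : X → ℝ, Dominated c (critValue c + ε) u := by
  have h : sInf {α : ℝ | ∃ u : X → ℝ, Dominated c α u} < critValue c + ε := by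
    have : critValue c = sInf {α : ℝ | ∃ u : X → ℝ, Dominated c α u} := rfl
    linarith
  obtain ⟨α, hα, hlt⟩ := (csInf_lt_iff domSet_bddBelow (domSet_nonempty hsl)).mp h
  obtain ⟨u, hu⟩ := hα
  exact ⟨u, fun a b => (hu a b).trans (by linarith)⟩

lemma cycle_nonneg (hsl : UniformlySuperlinear c) (k : ℕ) (p : ℕ → X) (hp : p k = p 0) :
    0 ≤ (∑ i ∈ Finset.range k, c (p i) (p (i + 1))) + k * critValue c := by
  by_contra h
  push_neg at h
  set Sc := ∑ i ∈ Finset.range k, c (p i) (p (i + 1)) with hSc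
  set t : ℝ := Sc + k * critValue c with ht
  have htneg : t < 0 := h
  have htpos : 0 < -t := by linarith
  have hεpos : 0 < -t / (k + 1) := by positivity
  obtain ⟨u, hu⟩ := exists_dominated_gt hsl hεpos
  have h2 := dominated_telescope hu k p
  rw [hp] at h2
  simp only [sub_self] at h2
  have hk1 : (0:ℝ) ≤ (k:ℝ) := by positivity
  have hklt : (k:ℝ) < (k:ℝ) + 1 := by linarith
  have : (k:ℝ) * (critValue c + -t / (k + 1)) = (k:ℝ) * critValue c + (k:ℝ) * (-t) / (k+1) := by
    ring
  rw [this] at h2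
  have hfrac : (k:ℝ) * (-t) / (k + 1) < -t := by
    rw [div_lt_iff₀ (by positivity)]
    nlinarith
  linarith

/-- the set of costs of chains from `x` to `y`, with the critical correction. -/
def chainCosts (c : X → X → ℝ) (x y : X) : Set ℝ :=
  {r : ℝ | ∃ (k : ℕ) (p : ℕ → X), p 0 = x ∧ p k = y ∧
    r = (∑ i ∈ Finset.range k, c (p i) (p (i + 1))) + k * critValue c}

lemma chainCosts_nonempty (x y : X) : (chainCosts c x y).Nonempty := by
  refine ⟨c x y + critValue c, 1, (fun i => if i = 0 then x else y), rfl, rfl, ?_⟩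
  simp

lemma chainCosts_append {x a : X} {r : ℝ} (hr : r ∈ chainCosts c x a) (b : X) :
    r + c a b + critValue c ∈ chainCosts c x b := by
  obtain ⟨k, p, h0, hk, hrv⟩ := hr
  refine ⟨k + 1, (fun i => if i ≤ k then p i else b), by simp [h0], by simp, ?_⟩
  rw [Finset.sum_range_succ]
  have h1 : ∀ i ∈ Finset.range k,
      c (if i ≤ k then p i else b) (if i + 1 ≤ k then p (i+1) else b) = c (p i) (p (i+1)) := by
    intro i hi
    rw [Finset.mem_range] at hi
    rw [if_pos (by omega), if_pos (by omega)]
  rw [Finset.sum_congr rfl h1]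
  simp only []
  rw [show ((if k ≤ k then p k else b) = a) from by rw [if_pos (le_refl k)]; exact hk,
    show ((if k + 1 ≤ k then p (k+1) else b) = b) from by rw [if_neg (by omega)]]
  push_cast
  rw [hrv]
  ring

lemma chainCosts_cycle_nonneg (hsl : UniformlySuperlinear c) {x : X} {r : ℝ}
    (hr : r ∈ chainCosts c x x) : 0 ≤ r := by
  obtain ⟨k, p, h0, hk, hrv⟩ := hr
  rw [hrv]
  exact cycle_nonneg hsl k p (hk.trans h0.symm)

lemma chainCosts_bddBelow (hsl : UniformlySuperlinear c) (x y : X) :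
    BddBelow (chainCosts c x y) := by
  refine ⟨-(c y x + critValue c), fun r hr => ?_⟩
  have := chainCosts_cycle_nonneg hsl (chainCosts_append hr x)
  linarith

/-- The one-sided Mañé potential from `x` (chains with `k ≥ 0` steps). -/
noncomputable def pot (c : X → X → ℝ) (x y : X) : ℝ := sInf (chainCosts c x y)

lemma pot_self (hsl : UniformlySuperlinear c) (x : X) : pot c x x = 0 := by
  refine le_antisymm ?_ (le_csInf (chainCosts_nonempty x x)
    (fun r hr => chainCosts_cycle_nonneg hsl hr))
  refine csInf_le (chainCosts_bddBelow hsl x x) ⟨0, (fun _ => x), rfl, rfl, by simp⟩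

lemma pot_dominated (hsl : UniformlySuperlinear c) (x : X) :
    Dominated c (critValue c) (pot c x) := by
  intro a b
  have h1 : ∀ r ∈ chainCosts c x a, pot c x b ≤ r + c a b + critValue c := by
    intro r hr
    exact csInf_le (chainCosts_bddBelow hsl x b) (chainCosts_append hr b)
  have h2 : pot c x b - c a b - critValue c ≤ pot c x a :=
    le_csInf (chainCosts_nonempty x a) (fun r hr => by linarith [h1 r hr])
  linarith

lemma le_pot {x : X} {u : X → ℝ} (hu : Dominated c (critValue c) u) (y : X) :
    u y - u x ≤ pot c x y := by
  refine le_csInf (chainCosts_nonempty x y) ?_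
  rintro r ⟨k, p, h0, hk, rfl⟩
  have := dominated_telescope hu k p
  rw [h0, hk] at this
  exact this

lemma mane_eq_pot (hsl : UniformlySuperlinear c) (x y : X) : mane c x y = pot c x y := by
  refine IsGreatest.csSup_eq ⟨⟨pot c x, pot_dominated hsl x, ?_⟩, ?_⟩
  · rw [pot_self hsl x]; ring
  · rintro r ⟨u, hu, rfl⟩
    exact le_pot hu y

end Aux
section Coarse

variable {X : Type*} [MetricSpace X] [Nonempty X] {c : X → X → ℝ} {K A α : ℝ}

lemma chain_bound {u : X → ℝ} (hu : Dominated c α u) (hK : 0 < K)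
    (hA : ∀ a b : X, dist a b ≤ K → c a b ≤ A) (hE : 0 ≤ A + max α 0) :
    ∀ (n : ℕ) (p : ℕ → X), (∀ i < n, dist (p i) (p (i + 1)) ≤ K) →
      u (p n) - u (p 0) ≤ (A + max α 0) * (1 + 2 / K * ∑ i ∈ Finset.range n, dist (p i) (p (i + 1))) := by
  intro n
  induction n using Nat.strong_induction_on with
  | _ n ih =>
    intro p hp
    set E := A + max α 0 with hEdef
    set T := ∑ i ∈ Finset.range n, dist (p i) (p (i + 1)) with hT
    have hTnn : 0 ≤ T := Finset.sum_nonneg (fun i _ => dist_nonneg)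
    have hstep : ∀ a b : X, dist a b ≤ K → u b - u a ≤ E := by
      intro a b hd
      have h1 := hu a b
      have h2 := hA a b hd
      have : α ≤ max α 0 := le_max_left _ _
      linarith
    by_cases hTK : T ≤ K
    · have hd : dist (p 0) (p n) ≤ K := (dist_le_range_sum_dist p n).trans (hT ▸ hTK)
      have h1 := hstep (p 0) (p n) hd
      nlinarith [mul_nonneg (mul_nonneg hE (by positivity : (0:ℝ) ≤ 2 / K)) hTnn]
    · push_neg at hTK
      have hn1 : 1 ≤ n := by
        by_contra hn
        push_neg at hn
        interval_cases n
        · simp [hT] at hTK; linarith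
      -- S m = partial sums
      set S : ℕ → ℝ := fun m => ∑ i ∈ Finset.range m, dist (p i) (p (i + 1)) with hS
      have hex : ∃ m, ¬ S m ≤ K := ⟨n, by simpa [hS, ← hT] using hTK.not_ge⟩
      set m0 := Nat.find hex with hm0
      have hm0spec : ¬ S m0 ≤ K := Nat.find_spec hex
      have hm0le : m0 ≤ n := Nat.find_min' hex (by simpa [hS, ← hT] using hTK.not_ge)
      have hm0two : 2 ≤ m0 := by
        rcases Nat.lt_or_ge m0 2 with h | h
        · exfalso
          interval_cases m0
          · exact hm0spec (by simp [hS]; exact le_of_lt hK)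
          · exact hm0spec (by simpa [hS] using hp 0 (by omega))
        · exact h
      set j := m0 - 1 with hj
      have hj1 : 1 ≤ j := by omega
      have hjm0 : j + 1 = m0 := by omega
      have hjn : j + 1 ≤ n := by omega
      have hSj : S j ≤ K := by
        have := Nat.find_min hex (show j < m0 by omega)
        simpa using this
      have hSj1 : K < S (j + 1) := by rw [hjm0]; exact lt_of_not_ge hm0spec
      -- split the chain
      set n' := n - (j + 1) with hn'
      have hnn' : n = (j + 1) + n' := by omega
      set q : ℕ → X := fun i => p (j + 1 + i) with hq
      have hq0 : q 0 = p (j + 1) := by simp [hq]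
      have hqn : q n' = p n := by simp [hq]; congr 1; omega
      have hqsteps : ∀ i < n', dist (q i) (q (i + 1)) ≤ K := by
        intro i hi
        have : j + 1 + (i + 1) = (j + 1 + i) + 1 := by omega
        simp only [hq, this]
        exact hp (j + 1 + i) (by omega)
      have hsum : T = S (j + 1) + ∑ i ∈ Finset.range n', dist (q i) (q (i + 1)) := by
        rw [hT, hnn', Finset.sum_range_add]
        rfl
      have hIH := ih n' (by omega) q hqsteps
      rw [hq0, hqn] at hIH
      have hsum' : ∑ i ∈ Finset.range n', dist (q i) (q (i + 1)) = T - S (j + 1) := by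
        linarith [hsum]
      rw [hsum'] at hIH
      -- three pieces
      have hpiece3 : u (p j) - u (p 0) ≤ E := by
        refine hstep _ _ ?_
        exact (dist_le_range_sum_dist p j).trans hSj
      have hpiece2 : u (p (j + 1)) - u (p j) ≤ E := hstep _ _ (hp j (by omega))
      have hmono : E * (1 + 2 / K * (T - S (j + 1))) ≤ E * (1 + 2 / K * (T - K)) := by
        apply mul_le_mul_of_nonneg_left _ hE
        have : 0 < 2 / K := by positivity
        nlinarith
      have hKK : 2 / K * K = 2 := by field_simp
      have : E * (1 + 2 / K * (T - K)) + 2 * E = E * (1 + 2 / K * T) := by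
        have h2 : 2 / K * (T - K) = 2 / K * T - 2 := by rw [mul_sub, hKK]
        rw [h2]; ring
      linarith

lemma coarse_bound {B : ℝ} (hB : 1 ≤ B) (hK : 0 < K) (hlen : IsBLengthSpaceAtScale X B K)
    {u : X → ℝ} (hu : Dominated c α u)
    (hA : ∀ a b : X, dist a b ≤ K → c a b ≤ A) (hE : 0 ≤ A + max α 0) (a b : X) :
    u b - u a ≤ (A + max α 0) * (1 + 2 * B / K * dist a b) := by
  obtain ⟨n, p, h0, hn, hsteps, hsum⟩ := hlen a b
  have h := chain_bound hu hK hA hE n p hsteps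
  rw [h0, hn] at h
  refine h.trans ?_
  apply mul_le_mul_of_nonneg_left _ hE
  have h2K : (0:ℝ) < 2 / K := by positivity
  have : 2 / K * ∑ i ∈ Finset.range n, dist (p i) (p (i + 1)) ≤ 2 / K * (B * dist a b) :=
    mul_le_mul_of_nonneg_left hsum (le_of_lt h2K)
  have heq : 2 / K * (B * dist a b) = 2 * B / K * dist a b := by ring
  linarith [heq ▸ this]

end Coarse
section ContInf

variable {X : Type*} [MetricSpace X] [Nonempty X] [ProperSpace X] {c : X → X → ℝ}

lemma bddBelow_range_add (hsl : UniformlySuperlinear c)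
    {w : X → ℝ} {M L : ℝ} (hL : 0 ≤ L)
    (hw : ∀ a b : X, w a - w b ≤ M + L * dist a b) (y : X) :
    BddBelow (Set.range fun z => w z + c z y) := by
  obtain ⟨C2, hC2⟩ := hsl L hL
  refine ⟨w y - M - C2, ?_⟩
  rintro r ⟨z, rfl⟩
  have h1 := hw y z
  have h2 := hC2 z y
  have h3 : dist y z = dist z y := dist_comm _ _
  have h5 : L * dist y z = L * dist z y := by rw [h3]
  have : w y - M - C2 ≤ w z + c z y := by linarith
  exact this

lemma continuous_sInf_add (hcont : Continuous fun q : X × X => c q.1 q.2)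
    (hsl : UniformlySuperlinear c) (hub : UniformlyBounded c)
    {w : X → ℝ} {M L : ℝ} (hL : 0 ≤ L)
    (hw : ∀ a b : X, w a - w b ≤ M + L * dist a b) :
    Continuous fun y => sInf (Set.range fun z => w z + c z y) := by
  have hBdd := bddBelow_range_add hsl hL hw
  obtain ⟨C, hC⟩ := hsl (L + 1) (by linarith)
  obtain ⟨A1, hA1⟩ := hub 1
  rw [continuous_iff_continuousAt]
  intro x0
  set R := |M| + |A1| + |C| + L + 1 + 1 with hR
  have hR0 : (0:ℝ) ≤ R := by positivity
  have hrestrict : ∀ y : X, dist y x0 ≤ 1 →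
      sInf (Set.range fun z => w z + c z y) = sInf ((fun z => w z + c z y) '' closedBall x0 R) := by
    intro y hy
    apply le_antisymm
    · exact csInf_le_csInf (hBdd y) ⟨_, mem_image_of_mem _ (mem_closedBall_self hR0)⟩
        (image_subset_range _ _)
    · refine le_csInf (Set.range_nonempty _) ?_
      rintro r ⟨z, rfl⟩
      by_cases hz : z ∈ closedBall x0 R
      · exact csInf_le ((hBdd y).mono (image_subset_range _ _)) (mem_image_of_mem _ hz)
      · have hD : R < dist z x0 := by
          rw [mem_closedBall, not_le] at hz; exact hz
        refine (csInf_le ((hBdd y).mono (image_subset_range _ _))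
          (mem_image_of_mem _ (mem_closedBall_self hR0))).trans ?_
        have h1 : w x0 - w z ≤ M + L * dist z x0 := by
          have := hw x0 z
          rwa [dist_comm x0 z] at this
        have h2 : c x0 y ≤ A1 := hA1 x0 y (by rwa [dist_comm x0 y])
        have h3 : (L + 1) * dist z y - C ≤ c z y := hC z y
        have h4 : dist z x0 ≤ dist z y + dist y x0 := dist_triangle _ _ _
        have h5 : (L + 1) * (dist z x0 - 1) ≤ (L + 1) * dist z y := by
          apply mul_le_mul_of_nonneg_left _ (by linarith)
          linarith
        have h6 : (L + 1) * (dist z x0 - 1) = L * dist z x0 + dist z x0 - L - 1 := by ring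
        have habsM := le_abs_self M
        have habsA := le_abs_self A1
        have habsC := le_abs_self C
        show w x0 + c x0 y ≤ w z + c z y
        linarith
  rw [Metric.continuousAt_iff]
  intro ε hε
  have hcomp : IsCompact (closedBall x0 R ×ˢ closedBall x0 1) :=
    (isCompact_closedBall x0 R).prod (isCompact_closedBall x0 1)
  have hucont := hcomp.uniformContinuousOn_of_continuous hcont.continuousOn
  rw [Metric.uniformContinuousOn_iff] at hucont
  obtain ⟨δ, hδ0, hδ⟩ := hucont (ε / 2) (by linarith)
  refine ⟨min δ 1, by positivity, ?_⟩
  intro y hy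
  have hy1 : dist y x0 ≤ 1 := le_of_lt (lt_of_lt_of_le hy (min_le_right _ _))
  have hyδ : dist y x0 < δ := lt_of_lt_of_le hy (min_le_left _ _)
  have hkey : ∀ z ∈ closedBall x0 R, |c z y - c z x0| ≤ ε / 2 := by
    intro z hz
    have hp1 : (z, y) ∈ closedBall x0 R ×ˢ closedBall x0 1 :=
      ⟨hz, mem_closedBall.mpr hy1⟩
    have hp2 : (z, x0) ∈ closedBall x0 R ×ˢ closedBall x0 1 :=
      ⟨hz, mem_closedBall_self zero_le_one⟩
    have hdp : dist ((z, y) : X × X) (z, x0) < δ := by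
      rw [Prod.dist_eq]
      simp only [dist_self]
      rw [max_eq_right dist_nonneg]
      exact hyδ
    have := hδ _ hp1 _ hp2 hdp
    rw [Real.dist_eq] at this
    exact le_of_lt this
  have himg : ∀ y1 y2 : X, dist y1 x0 ≤ 1 → dist y2 x0 ≤ 1 →
      (∀ z ∈ closedBall x0 R, c z y1 ≤ c z y2 + ε / 2) →
      sInf (Set.range fun z => w z + c z y1) ≤ sInf (Set.range fun z => w z + c z y2) + ε / 2 := by
    intro y1 y2 h1 h2 hcc
    rw [hrestrict y1 h1, hrestrict y2 h2, ← sub_le_iff_le_add]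
    refine le_csInf ⟨_, mem_image_of_mem _ (mem_closedBall_self hR0)⟩ ?_
    rintro r ⟨z, hz, rfl⟩
    have hle : sInf ((fun z => w z + c z y1) '' closedBall x0 R) ≤ w z + c z y1 :=
      csInf_le (((hBdd y1).mono (image_subset_range _ _))) (mem_image_of_mem _ hz)
    have h3 := hcc z hz
    show sInf ((fun z => w z + c z y1) '' closedBall x0 R) - ε / 2 ≤ w z + c z y2
    linarith
  have hfy := himg y x0 hy1 (by simp) (fun z hz => by
    have := hkey z hz; rw [abs_le] at this; linarith [this.1])
  have hfx := himg x0 y (by simp) hy1 (fun z hz => by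
    have := hkey z hz; rw [abs_le] at this; linarith [this.2])
  rw [Real.dist_eq]
  have : |sInf (Set.range fun z => w z + c z y) - sInf (Set.range fun z => w z + c z x0)| ≤ ε / 2 :=
    abs_le.mpr ⟨by linarith, by linarith⟩
  linarith

end ContInf
section Approx

variable {X : Type*} [MetricSpace X] [Nonempty X] [ProperSpace X] {c : X → X → ℝ} {B K : ℝ}

lemma approx_subsolution (hB : 1 ≤ B) (hK : 0 < K) (hlen : IsBLengthSpaceAtScale X B K)
    (hcont : Continuous fun q : X × X => c q.1 q.2)
    (hsl : UniformlySuperlinear c) (hub : UniformlyBounded c) (x : X)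
    {ε ρ : ℝ} (hε : 0 < ε) (hρ : 0 < ρ) :
    ∃ g : X → ℝ, Continuous g ∧ Dominated c (critValue c) g ∧ 0 ≤ g x ∧ g x ≤ ε ∧
      ∀ y : X, ρ ≤ dist x y → g y = mane c x y := by
  obtain ⟨A, hA⟩ := hub K
  set α0 := critValue c with hα0
  set E := A + max α0 0 with hE
  have hcxx : 0 ≤ c x x + α0 := by
    have h := cycle_nonneg hsl 1 (fun _ => x) rfl
    simpa using h
  have hcA : c x x ≤ A := hA x x (by simp [hK.le])
  have hE0 : 0 ≤ E := by
    rcases le_total α0 0 with h | h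
    · rw [hE, max_eq_right h]; linarith
    · rw [hE, max_eq_left h]; linarith
  have hB0 : (0:ℝ) ≤ B := by linarith
  set L0 := 2 * B * E / K with hL0def
  have hL0 : 0 ≤ L0 := div_nonneg (mul_nonneg (by linarith) hE0) hK.le
  have hcoarse : ∀ u : X → ℝ, Dominated c α0 u → ∀ a b : X, u a - u b ≤ E + L0 * dist b a := by
    intro u hu a b
    have h := coarse_bound hB hK hlen hu hA hE0 b a
    have : E * (1 + 2 * B / K * dist b a) = E + L0 * dist b a := by
      rw [hL0def]; ring
    linarith [this ▸ h]
  -- the continuous extension v of pot off x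
  set v : X → ℝ := fun y => sInf (Set.range fun z => (pot c x z + α0) + c z y) with hv
  have hwpot : ∀ a b : X, (pot c x a + α0) - (pot c x b + α0) ≤ E + L0 * dist a b := by
    intro a b
    have := hcoarse (pot c x) (pot_dominated hsl x) a b
    rw [dist_comm] at this
    linarith
  have hBddv : ∀ y, BddBelow (Set.range fun z => (pot c x z + α0) + c z y) :=
    bddBelow_range_add hsl hL0 hwpot
  have hvelt : ∀ y z : X, v y ≤ pot c x z + α0 + c z y := by
    intro y z
    exact csInf_le (hBddv y) ⟨z, rfl⟩
  have hpotle : ∀ y, pot c x y ≤ v y := by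
    intro y
    refine le_csInf (Set.range_nonempty _) ?_
    rintro r ⟨z, rfl⟩
    have := pot_dominated hsl x z y
    show pot c x y ≤ pot c x z + α0 + c z y
    linarith
  have hvdom : Dominated c α0 v := by
    intro a b
    have h1 := hvelt b a
    have h2 := hpotle a
    linarith
  have hvcont : Continuous v := continuous_sInf_add hcont hsl hub hL0 hwpot
  have hveq : ∀ y : X, y ≠ x → v y = pot c x y := by
    intro y hy
    refine le_antisymm ?_ (hpotle y)
    refine le_csInf (chainCosts_nonempty x y) ?_
    rintro r ⟨k, p, h0, hk, rfl⟩
    cases k with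
    | zero => exact absurd (hk.symm.trans h0) hy
    | succ k' =>
      have hpre : (∑ i ∈ Finset.range k', c (p i) (p (i + 1))) + k' * α0 ∈ chainCosts c x (p k') :=
        ⟨k', p, h0, rfl, rfl⟩
      have h1 : pot c x (p k') ≤ (∑ i ∈ Finset.range k', c (p i) (p (i + 1))) + k' * α0 :=
        csInf_le (chainCosts_bddBelow hsl x (p k')) hpre
      have h2 : v y ≤ pot c x (p k') + α0 + c (p k') y := hvelt y (p k')
      rw [Finset.sum_range_succ, hk]
      push_cast
      linarith
  have hvx : 0 ≤ v x := by
    have := hpotle x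
    rw [pot_self hsl x] at this
    exact this
  have hvle1 : ∀ z : X, v z ≤ c x z + α0 := by
    intro z
    have := hvelt z x
    rw [pot_self hsl x] at this
    linarith
  -- the flipped cost and the function P = -Q
  set cf : X → X → ℝ := fun a b => c b a with hcf
  have hcont' : Continuous fun q : X × X => cf q.1 q.2 :=
    hcont.comp (continuous_snd.prodMk continuous_fst)
  have hsl' : UniformlySuperlinear cf := by
    intro k hk
    obtain ⟨C, hC⟩ := hsl k hk
    exact ⟨C, fun a b => by have := hC b a; rwa [dist_comm] at this⟩
  have hub' : UniformlyBounded cf := by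
    intro R
    obtain ⟨A', hA'⟩ := hub R
    exact ⟨A', fun a b hd => hA' b a (by rwa [dist_comm] at hd)⟩
  have hwv : ∀ a b : X, (-v a) - (-v b) ≤ E + L0 * dist a b := by
    intro a b
    have := hcoarse v hvdom b a
    linarith
  set Q : X → ℝ := fun y => sInf (Set.range fun z => (-v z) + cf z y) with hQ
  have hQbdd : ∀ y, BddBelow (Set.range fun z => (-v z) + cf z y) :=
    bddBelow_range_add (c := cf) hsl' hL0 hwv
  have hQcont : Continuous Q := continuous_sInf_add (c := cf) hcont' hsl' hub' hL0 hwv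
  have hPkey : ∀ y z : X, v z ≤ -(Q y) + c y z := by
    intro y z
    have : Q y ≤ (-v z) + cf z y := csInf_le (hQbdd y) ⟨z, rfl⟩
    have hcfz : cf z y = c y z := rfl
    rw [hcfz] at this
    linarith
  have hPx : -(Q x) ≤ α0 := by
    have : -α0 ≤ Q x := by
      refine le_csInf (Set.range_nonempty _) ?_
      rintro r ⟨z, rfl⟩
      have := hvle1 z
      show -α0 ≤ -v z + cf z x
      have hcfz : cf z x = c x z := rfl
      rw [hcfz]
      linarith
    linarith
  -- choose the radius r0
  have hPat : ContinuousAt (fun y => -(Q y)) x := (hQcont.neg).continuousAt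
  rw [Metric.continuousAt_iff] at hPat
  obtain ⟨δ, hδ0, hδ⟩ := hPat ε hε
  set r0 := min (δ / 2) ρ with hr0
  have hr0pos : 0 < r0 := lt_min (by linarith) hρ
  have hPr0 : ∀ y : X, dist x y ≤ r0 → -(Q y) ≤ α0 + ε := by
    intro y hy
    have h1 : dist y x < δ := by
      rw [dist_comm]
      calc dist x y ≤ r0 := hy
        _ ≤ δ / 2 := min_le_left _ _
        _ < δ := by linarith
    have h2 := hδ h1
    rw [Real.dist_eq] at h2
    have := abs_lt.mp h2
    linarith [this.1, this.2, hPx]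
  -- choose the slope N
  have hvEε : 0 ≤ v x + E + ε := by linarith
  obtain ⟨N, hN0, hNkey⟩ : ∃ N : ℝ, 0 ≤ N ∧ ∀ y : X, r0 ≤ dist x y → v y ≤ ε + N * dist x y := by
    have hq0 : 0 ≤ (v x + E + ε) / r0 := div_nonneg hvEε hr0pos.le
    refine ⟨L0 + (v x + E + ε) / r0, by linarith, ?_⟩
    intro y hy
    have h1 : v y - v x ≤ E + L0 * dist x y := hcoarse v hvdom y x
    have h2 : (v x + E + ε) / r0 * r0 ≤ (v x + E + ε) / r0 * dist x y :=
      mul_le_mul_of_nonneg_left hy hq0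
    have h3 : (v x + E + ε) / r0 * r0 = v x + E + ε := by
      field_simp
    rw [h3] at h2
    have h4 : (L0 + (v x + E + ε) / r0) * dist x y
        = L0 * dist x y + (v x + E + ε) / r0 * dist x y := by ring
    rw [h4]
    linarith
  -- the approximating function
  refine ⟨fun y => min (v y) (ε + N * dist x y), ?_, ?_, ?_, ?_, ?_⟩
  · exact hvcont.min (continuous_const.add (continuous_const.mul
      (Continuous.dist continuous_const continuous_id)))
  · intro a b
    show min (v b) (ε + N * dist x b) - min (v a) (ε + N * dist x a) ≤ c a b + α0
    rcases le_or_gt (v a) (ε + N * dist x a) with h | h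
    · have h1 : min (v a) (ε + N * dist x a) = v a := min_eq_left h
      have h2 : min (v b) (ε + N * dist x b) ≤ v b := min_le_left _ _
      have h3 := hvdom a b
      linarith
    · have h1 : min (v a) (ε + N * dist x a) = ε + N * dist x a := min_eq_right h.le
      have hra : dist x a ≤ r0 := by
        by_contra hc
        push_neg at hc
        exact absurd (hNkey a hc.le) (not_le.mpr h)
      have hPa := hPr0 a hra
      have h2 : v b ≤ -(Q a) + c a b := hPkey a b
      have h3 : min (v b) (ε + N * dist x b) ≤ v b := min_le_left _ _
      have h4 : 0 ≤ N * dist x a := mul_nonneg hN0 dist_nonneg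
      linarith
  · show 0 ≤ min (v x) (ε + N * dist x x)
    rw [dist_self, mul_zero, add_zero]
    exact le_min hvx hε.le
  · show min (v x) (ε + N * dist x x) ≤ ε
    rw [dist_self, mul_zero, add_zero]
    exact min_le_right _ _
  · intro y hy
    have hr0y : r0 ≤ dist x y := le_trans (min_le_right _ _) hy
    have hne : y ≠ x := by
      intro hyx
      rw [hyx, dist_self] at hy
      linarith
    show min (v y) (ε + N * dist x y) = mane c x y
    rw [min_eq_left (hNkey y hr0y), hveq y hne, mane_eq_pot hsl]

end Approx
theorem mane_potential_limit_of_continuous_subsolutions {X : Type*} [MetricSpace X] [Nonempty X] [ProperSpace X]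
    {B K : ℝ} (hB : 1 ≤ B) (hK : 0 < K) (hlen : IsBLengthSpaceAtScale X B K)
    {c : X → X → ℝ} (hcont : Continuous fun q : X × X => c q.1 q.2)
    (hsl : UniformlySuperlinear c) (hub : UniformlyBounded c) (x : X) :
    (∃ u : ℕ → X → ℝ,
      (∀ n : ℕ, Continuous (u n) ∧ Dominated c (critValue c) (u n)) ∧
      ∀ y : X, Tendsto (fun n => u n y) atTop (𝓝 (mane c x y))) ∧
    (∀ V ∈ 𝓝 x, ∃ u : ℕ → X → ℝ,
      (∀ n : ℕ, Continuous (u n) ∧ Dominated c (critValue c) (u n)) ∧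
      (∀ y : X, Tendsto (fun n => u n y) atTop (𝓝 (mane c x y))) ∧
      TendstoUniformlyOn u (mane c x) atTop Vᶜ) := by
  have hmanex : mane c x x = 0 := by rw [mane_eq_pot hsl, pot_self hsl]
  have hch : ∀ n : ℕ, ∃ g : X → ℝ, Continuous g ∧ Dominated c (critValue c) g ∧
      0 ≤ g x ∧ g x ≤ 1 / ((n : ℝ) + 1) ∧
      ∀ y : X, 1 / ((n : ℝ) + 1) ≤ dist x y → g y = mane c x y :=
    fun n => approx_subsolution hB hK hlen hcont hsl hub x (by positivity) (by positivity)
  choose u hucont hudom hu0 hu1 hufar using hch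
  have hidx : ∀ {n0 n : ℕ}, n0 ≤ n → (1 : ℝ) / ((n : ℝ) + 1) ≤ 1 / ((n0 : ℝ) + 1) := by
    intro n0 n hn
    apply one_div_le_one_div_of_le (by positivity)
    have : (n0 : ℝ) ≤ (n : ℝ) := by exact_mod_cast hn
    linarith
  have hptwise : ∀ y : X, Tendsto (fun n => u n y) atTop (𝓝 (mane c x y)) := by
    intro y
    by_cases hy : y = x
    · subst hy
      rw [hmanex]
      exact squeeze_zero (fun n => hu0 n) (fun n => hu1 n) tendsto_one_div_add_atTop_nhds_zero_nat
    · have hd : 0 < dist x y := dist_pos.mpr (fun h => hy h.symm)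
      obtain ⟨n0, hn0⟩ := exists_nat_one_div_lt hd
      refine Tendsto.congr' ?_ tendsto_const_nhds
      filter_upwards [eventually_ge_atTop n0] with n hn
      exact (hufar n y (le_trans (hidx hn) hn0.le)).symm
  refine ⟨⟨u, fun n => ⟨hucont n, hudom n⟩, hptwise⟩, ?_⟩
  intro V hV
  refine ⟨u, fun n => ⟨hucont n, hudom n⟩, hptwise, ?_⟩
  obtain ⟨ρ, hρ0, hball⟩ := Metric.mem_nhds_iff.mp hV
  rw [Metric.tendstoUniformlyOn_iff]
  intro δ hδ
  obtain ⟨n0, hn0⟩ := exists_nat_one_div_lt hρ0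
  filter_upwards [eventually_ge_atTop n0] with n hn y hyV
  have hyd : ρ ≤ dist x y := by
    by_contra hc
    push_neg at hc
    exact hyV (hball (by rw [mem_ball, dist_comm]; exact hc))
  have heq : u n y = mane c x y :=
    hufar n y (le_trans (hidx hn) (le_trans hn0.le hyd))
  rw [heq, dist_self]
  exact hδ
end

section
/- For all x,y ∈ X with x ≠ y one has φ₁(x,y) = φ(x,y), and φ₁(x,x) ≥ φ(x,x) = 0 for all x. Moreover, for all x,y ∈ X, φ₁(x,y) = T⁻φ_x(y) + α[0]. -/
set_option linter.unusedSectionVars false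


open Metric Set Filter Topology

section ManeAux

variable {X : Type*} [Nonempty X] {c : X → X → ℝ}

/-- Chained domination inequality. -/
lemma dom_chain {α : ℝ} {u : X → ℝ} (hu : Dominated c α u) (p : ℕ → X) (n : ℕ) :
    u (p n) - u (p 0) ≤ (∑ i ∈ Finset.range n, c (p i) (p (i + 1))) + n * α := by
  induction n with
  | zero => simp
  | succ n ih =>
    rw [Finset.sum_range_succ]
    have h := hu (p n) (p (n + 1))
    push_cast
    push_cast at ih
    linarith

/-- Extend a chain of length `n` by one extra point. -/
def extChain (p : ℕ → X) (n : ℕ) (z : X) : ℕ → X := fun i => if i = n + 1 then z else p i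

lemma extChain_zero (p : ℕ → X) (n : ℕ) (z : X) : extChain p n z 0 = p 0 := by
  simp [extChain]

lemma extChain_last (p : ℕ → X) (n : ℕ) (z : X) : extChain p n z (n + 1) = z := by
  simp [extChain]

lemma sum_extChain (c : X → X → ℝ) (p : ℕ → X) (n : ℕ) (z : X) :
    (∑ i ∈ Finset.range (n + 1), c (extChain p n z i) (extChain p n z (i + 1)))
      = (∑ i ∈ Finset.range n, c (p i) (p (i + 1))) + c (p n) z := by
  rw [Finset.sum_range_succ]
  congr 1
  · refine Finset.sum_congr rfl fun i hi => ?_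
    rw [Finset.mem_range] at hi
    have h1 : i ≠ n + 1 := by omega
    have h2 : i + 1 ≠ n + 1 := by omega
    simp [extChain, h1, h2, show i ≠ n by omega]
  · simp [extChain]

/-- All closed chains have nonnegative `α`-cost. -/
def CCN (c : X → X → ℝ) (α : ℝ) : Prop :=
  ∀ (n : ℕ) (p : ℕ → X), p n = p 0 →
    0 ≤ (∑ i ∈ Finset.range n, c (p i) (p (i + 1))) + n * α

lemma ccn_of_dom {α : ℝ} {u : X → ℝ} (hu : Dominated c α u) : CCN c α := by
  intro n p hp
  have h := dom_chain hu p n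
  rw [hp] at h
  linarith

lemma exists_dom_of_ccn {α : ℝ} (h : CCN c α) : ∃ u : X → ℝ, Dominated c α u := by
  classical
  obtain ⟨x₀⟩ := ‹Nonempty X›
  set S : X → Set ℝ := fun y => {r | ∃ (n : ℕ) (p : ℕ → X), 1 ≤ n ∧ p 0 = x₀ ∧ p n = y ∧
    r = (∑ i ∈ Finset.range n, c (p i) (p (i + 1))) + n * α} with hS
  have hne : ∀ y, (S y).Nonempty := by
    intro y
    refine ⟨(∑ i ∈ Finset.range 1,
        c ((fun i => if i = 0 then x₀ else y) i) ((fun i => if i = 0 then x₀ else y) (i + 1)))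
        + (1 : ℕ) * α, 1, fun i => if i = 0 then x₀ else y, le_rfl, by simp, by simp, rfl⟩
  have hext : ∀ y z r, r ∈ S y → r + c y z + α ∈ S z := by
    rintro y z r ⟨n, p, hn, h0, hy, rfl⟩
    refine ⟨n + 1, extChain p n z, by omega, by rw [extChain_zero]; exact h0,
      extChain_last p n z, ?_⟩
    rw [sum_extChain, hy]
    push_cast
    ring
  have hbdd : ∀ y, BddBelow (S y) := by
    intro y
    refine ⟨-(c y x₀) - α, fun r hr => ?_⟩
    obtain ⟨n, p, hn, h0, hy, hr2⟩ := hext y x₀ r hr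
    have h3 := h n p (by rw [hy, h0])
    linarith
  refine ⟨fun y => sInf (S y), ?_⟩
  intro y z
  have key : ∀ r ∈ S y, sInf (S z) - c y z - α ≤ r := by
    intro r hr
    have := csInf_le (hbdd z) (hext y z r hr)
    linarith
  have := le_csInf (hne y) key
  linarith

lemma exists_crit (hlb : ∃ C : ℝ, ∀ x y : X, -C ≤ c x y) :
    ∃ u : X → ℝ, Dominated c (critValue c) u := by
  obtain ⟨C, hC⟩ := hlb
  have hDE : {α : ℝ | ∃ u : X → ℝ, Dominated c α u} = {α : ℝ | CCN c α} := by
    ext α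
    exact ⟨fun ⟨u, hu⟩ => ccn_of_dom hu, fun h => exists_dom_of_ccn h⟩
  have hEne : CCN c C := by
    intro n p _
    have hsum : (n : ℝ) * (-C) ≤ ∑ i ∈ Finset.range n, c (p i) (p (i + 1)) := by
      have := Finset.sum_le_sum (fun i (_ : i ∈ Finset.range n) => hC (p i) (p (i + 1)))
      simpa [Finset.sum_const, nsmul_eq_mul] using this
    nlinarith
  have hccn : CCN c (sInf {α : ℝ | CCN c α}) := by
    intro n p hp
    rcases Nat.eq_zero_or_pos n with h0 | h1
    · subst h0; simp
    · have hn : (0 : ℝ) < n := by exact_mod_cast h1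
      have hlbd : -(∑ i ∈ Finset.range n, c (p i) (p (i + 1))) / n ≤
          sInf {α : ℝ | CCN c α} := by
        apply le_csInf ⟨C, by exact hEne⟩
        intro α hα
        have h2 := hα n p hp
        rw [div_le_iff₀ hn]
        nlinarith
      rw [div_le_iff₀ hn] at hlbd
      nlinarith
  have : critValue c = sInf {α : ℝ | CCN c α} := by
    rw [critValue, hDE]
  rw [this]
  exact exists_dom_of_ccn hccn

variable {u₀ : X → ℝ}

lemma mane_self (hu₀ : Dominated c (critValue c) u₀) (x : X) : mane c x x = 0 := by
  have hset : {r : ℝ | ∃ u : X → ℝ, Dominated c (critValue c) u ∧ r = u x - u x} = {0} := by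
    ext r
    constructor
    · rintro ⟨u, _, rfl⟩; simp
    · intro hr
      rw [Set.mem_singleton_iff] at hr
      subst hr
      exact ⟨u₀, hu₀, (sub_self _).symm⟩
  rw [mane, hset, csSup_singleton]

lemma mane_le_chain (hu₀ : Dominated c (critValue c) u₀) (p : ℕ → X) (n : ℕ) :
    mane c (p 0) (p n) ≤ (∑ i ∈ Finset.range n, c (p i) (p (i + 1))) + n * critValue c := by
  have hne : {r : ℝ | ∃ u : X → ℝ, Dominated c (critValue c) u ∧
      r = u (p n) - u (p 0)}.Nonempty := ⟨u₀ (p n) - u₀ (p 0), u₀, hu₀, rfl⟩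
  apply csSup_le hne
  rintro r ⟨u, hu, rfl⟩
  exact dom_chain hu p n

lemma mane_bddAbove (x y : X) :
    BddAbove {r : ℝ | ∃ u : X → ℝ, Dominated c (critValue c) u ∧ r = u y - u x} := by
  refine ⟨c x y + critValue c, ?_⟩
  rintro r ⟨u, hu, rfl⟩
  exact hu x y

lemma cChain_set_nonempty (x y : X) {k : ℕ} (hk : 1 ≤ k) :
    {r : ℝ | ∃ p : ℕ → X, p 0 = x ∧ p k = y ∧
      r = ∑ i ∈ Finset.range k, c (p i) (p (i + 1))}.Nonempty := by
  classical
  have hk0 : k ≠ 0 := by omega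
  exact ⟨_, fun i => if i = 0 then x else y, by simp, by simp [hk0], rfl⟩

lemma cChain_set_bddBelow (hu₀ : Dominated c (critValue c) u₀) (x y : X) (k : ℕ) :
    BddBelow {r : ℝ | ∃ p : ℕ → X, p 0 = x ∧ p k = y ∧
      r = ∑ i ∈ Finset.range k, c (p i) (p (i + 1))} := by
  refine ⟨u₀ y - u₀ x - k * critValue c, ?_⟩
  rintro r ⟨p, h0, hky, rfl⟩
  have h := dom_chain hu₀ p k
  rw [h0, hky] at h
  linarith

lemma mane_le_cChain (hu₀ : Dominated c (critValue c) u₀) (x y : X) {k : ℕ} (hk : 1 ≤ k) :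
    mane c x y ≤ cChain c k x y + k * critValue c := by
  have h : mane c x y - k * critValue c ≤ cChain c k x y := by
    apply le_csInf (cChain_set_nonempty x y hk)
    rintro r ⟨p, h0, hky, rfl⟩
    have h := mane_le_chain hu₀ p k
    rw [h0, hky] at h
    linarith
  linarith

lemma phiN_set_nonempty (x y : X) :
    {r : ℝ | ∃ k : ℕ, 1 ≤ k ∧ r = cChain c k x y + k * critValue c}.Nonempty :=
  ⟨cChain c 1 x y + (1 : ℕ) * critValue c, 1, le_rfl, rfl⟩

lemma mane_le_phiN (hu₀ : Dominated c (critValue c) u₀) (x y : X) :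
    mane c x y ≤ phiN c (critValue c) 1 x y := by
  apply le_csInf (phiN_set_nonempty x y)
  rintro r ⟨k, hk, rfl⟩
  exact mane_le_cChain hu₀ x y hk

lemma phiN_set_bddBelow (hu₀ : Dominated c (critValue c) u₀) (x y : X) :
    BddBelow {r : ℝ | ∃ k : ℕ, 1 ≤ k ∧ r = cChain c k x y + k * critValue c} := by
  refine ⟨mane c x y, ?_⟩
  rintro r ⟨k, hk, rfl⟩
  exact mane_le_cChain hu₀ x y hk

lemma phiN_le_cChain (hu₀ : Dominated c (critValue c) u₀) (x y : X) {k : ℕ} (hk : 1 ≤ k) :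
    phiN c (critValue c) 1 x y ≤ cChain c k x y + k * critValue c :=
  csInf_le (phiN_set_bddBelow hu₀ x y) ⟨k, hk, rfl⟩

lemma phiN_triangle (hu₀ : Dominated c (critValue c) u₀) (x y z : X) :
    phiN c (critValue c) 1 x z ≤ phiN c (critValue c) 1 x y + c y z + critValue c := by
  have key : ∀ r ∈ {r : ℝ | ∃ k : ℕ, 1 ≤ k ∧ r = cChain c k x y + k * critValue c},
      phiN c (critValue c) 1 x z - c y z - critValue c ≤ r := by
    rintro r ⟨k, hk, rfl⟩
    have h1 : ∀ s ∈ {r : ℝ | ∃ p : ℕ → X, p 0 = x ∧ p k = y ∧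
        r = ∑ i ∈ Finset.range k, c (p i) (p (i + 1))},
        cChain c (k + 1) x z ≤ s + c y z := by
      rintro s ⟨p, h0, hky, rfl⟩
      have mem : (∑ i ∈ Finset.range k, c (p i) (p (i + 1))) + c y z ∈
          {r : ℝ | ∃ p : ℕ → X, p 0 = x ∧ p (k + 1) = z ∧
            r = ∑ i ∈ Finset.range (k + 1), c (p i) (p (i + 1))} := by
        refine ⟨extChain p k z, by rw [extChain_zero]; exact h0, extChain_last p k z, ?_⟩
        rw [sum_extChain, hky]
      exact csInf_le (cChain_set_bddBelow hu₀ x z (k + 1)) mem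
    have h2 : cChain c (k + 1) x z - c y z ≤ cChain c k x y := by
      apply le_csInf (cChain_set_nonempty x y hk)
      intro s hs
      linarith [h1 s hs]
    have h3 : phiN c (critValue c) 1 x z ≤ cChain c (k + 1) x z + (k + 1 : ℕ) * critValue c :=
      phiN_le_cChain hu₀ x z (by omega)
    push_cast at h3 ⊢
    linarith
  have := le_csInf (phiN_set_nonempty x y) key
  have hP : phiN c (critValue c) 1 x y =
      sInf {r : ℝ | ∃ k : ℕ, 1 ≤ k ∧ r = cChain c k x y + k * critValue c} := rfl
  rw [hP]
  linarith

lemma phiN_le_c (hu₀ : Dominated c (critValue c) u₀) (x z : X) :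
    phiN c (critValue c) 1 x z ≤ c x z + critValue c := by
  classical
  have hc1 : cChain c 1 x z ≤ c x z := by
    apply csInf_le (cChain_set_bddBelow hu₀ x z 1)
    exact ⟨fun i => if i = 0 then x else z, by simp, by simp, by simp⟩
  have h := phiN_le_cChain hu₀ x z (k := 1) le_rfl
  push_cast at h
  linarith

lemma phiN_self_nonneg (hu₀ : Dominated c (critValue c) u₀) (x : X) :
    0 ≤ phiN c (critValue c) 1 x x := by
  have := mane_le_phiN hu₀ x x
  rw [mane_self hu₀ x] at this
  exact this

open Classical in
/-- The candidate critical sub-solution `z ↦ φ₁(x,z)` corrected at the base point. -/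
noncomputable def wFn (c : X → X → ℝ) (x z : X) : ℝ :=
  if z = x then 0 else phiN c (critValue c) 1 x z

lemma wFn_le (hu₀ : Dominated c (critValue c) u₀) (x z : X) :
    wFn c x z ≤ phiN c (critValue c) 1 x z := by
  unfold wFn
  split
  · next h => subst h; exact phiN_self_nonneg hu₀ _
  · exact le_rfl

lemma wFn_dom (hu₀ : Dominated c (critValue c) u₀) (x : X) :
    Dominated c (critValue c) (wFn c x) := by
  intro y z
  by_cases hy : y = x
  · subst hy
    have h1 : wFn c y y = 0 := by simp [wFn]
    have h2 := (wFn_le hu₀ y z).trans (phiN_le_c hu₀ y z)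
    rw [h1]
    linarith
  · have h1 : wFn c x y = phiN c (critValue c) 1 x y := by simp [wFn, hy]
    have h2 := (wFn_le hu₀ x z).trans (phiN_triangle hu₀ x y z)
    rw [h1]
    linarith

lemma mane_eq_wFn (hu₀ : Dominated c (critValue c) u₀) (x z : X) :
    mane c x z = wFn c x z := by
  by_cases hz : z = x
  · subst hz
    rw [mane_self hu₀ _]
    simp [wFn]
  · have hle : phiN c (critValue c) 1 x z ≤ mane c x z := by
      apply le_csSup (mane_bddAbove x z)
      refine ⟨wFn c x, wFn_dom hu₀ x, ?_⟩
      simp [wFn, hz]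
    have h := mane_le_phiN hu₀ x z
    have : wFn c x z = phiN c (critValue c) 1 x z := by simp [wFn, hz]
    rw [this]
    linarith

lemma phiN_le_mane_add (hu₀ : Dominated c (critValue c) u₀) (x y z : X) :
    phiN c (critValue c) 1 x y ≤ mane c x z + c z y + critValue c := by
  rw [mane_eq_wFn hu₀]
  by_cases hz : z = x
  · subst hz
    have h1 : wFn c z z = 0 := by simp [wFn]
    have h2 := phiN_le_c hu₀ z y
    rw [h1]
    linarith
  · have h1 : wFn c x z = phiN c (critValue c) 1 x z := by simp [wFn, hz]
    have h2 := phiN_triangle hu₀ x z y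
    rw [h1]
    linarith

lemma Tm_mane_bddBelow (hu₀ : Dominated c (critValue c) u₀) (x y : X) :
    BddBelow (Set.range fun z => mane c x z + c z y) := by
  refine ⟨phiN c (critValue c) 1 x y - critValue c, ?_⟩
  rintro r ⟨z, rfl⟩
  have := phiN_le_mane_add hu₀ x y z
  dsimp only
  linarith

lemma phiN_eq_Tm (hu₀ : Dominated c (critValue c) u₀) (x y : X) :
    phiN c (critValue c) 1 x y = Tm c (mane c x) y + critValue c := by
  have hTm : Tm c (mane c x) y = ⨅ z, (mane c x z + c z y) := rfl
  have t2 : phiN c (critValue c) 1 x y - critValue c ≤ Tm c (mane c x) y := by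
    rw [hTm]
    apply le_ciInf
    intro z
    have := phiN_le_mane_add hu₀ x y z
    linarith
  have t3 : Tm c (mane c x) y + critValue c ≤ phiN c (critValue c) 1 x y := by
    have h : Tm c (mane c x) y + critValue c ≤
        sInf {r : ℝ | ∃ k : ℕ, 1 ≤ k ∧ r = cChain c k x y + k * critValue c} := by
      apply le_csInf (phiN_set_nonempty x y)
      rintro r ⟨k, hk, rfl⟩
      obtain ⟨m, rfl⟩ : ∃ m, k = m + 1 := ⟨k - 1, by omega⟩
      have hchain : ∀ s ∈ {r : ℝ | ∃ p : ℕ → X, p 0 = x ∧ p (m + 1) = y ∧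
          r = ∑ i ∈ Finset.range (m + 1), c (p i) (p (i + 1))},
          Tm c (mane c x) y + critValue c - ((m + 1 : ℕ) : ℝ) * critValue c ≤ s := by
        rintro s ⟨p, h0, hk1, rfl⟩
        have hTmle : Tm c (mane c x) y ≤ mane c x (p m) + c (p m) y := by
          rw [hTm]
          exact ciInf_le (Tm_mane_bddBelow hu₀ x y) (p m)
        have hm := mane_le_chain hu₀ p m
        rw [h0] at hm
        rw [Finset.sum_range_succ, hk1]
        push_cast
        linarith
      have h4 : Tm c (mane c x) y + critValue c - ((m + 1 : ℕ) : ℝ) * critValue c ≤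
          cChain c (m + 1) x y :=
        le_csInf (cChain_set_nonempty x y (by omega)) hchain
      linarith
    exact h
  linarith

end ManeAux

theorem phiOne_eq_mane_off_diagonal {X : Type*} [MetricSpace X] [Nonempty X] [ProperSpace X]
    {B K : ℝ} (hB : 1 ≤ B) (hK : 0 < K) (hlen : IsBLengthSpaceAtScale X B K)
    {c : X → X → ℝ} (hcont : Continuous fun q : X × X => c q.1 q.2)
    (hsl : UniformlySuperlinear c) (hub : UniformlyBounded c) :
    (∀ x y : X, x ≠ y → phiN c (critValue c) 1 x y = mane c x y) ∧
    (∀ x : X, mane c x x = 0 ∧ 0 ≤ phiN c (critValue c) 1 x x) ∧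
    (∀ x y : X, phiN c (critValue c) 1 x y = Tm c (mane c x) y + critValue c) := by
  obtain ⟨C0, hC0⟩ := hsl 0 le_rfl
  have hlb : ∃ C : ℝ, ∀ x y : X, -C ≤ c x y := ⟨C0, fun x y => by
    have := hC0 x y; linarith⟩
  obtain ⟨u₀, hu₀⟩ := exists_crit hlb
  refine ⟨?_, ?_, ?_⟩
  · intro x y hxy
    have h1 := mane_eq_wFn hu₀ x y
    have h2 : wFn c x y = phiN c (critValue c) 1 x y := by
      simp [wFn, Ne.symm hxy]
    rw [h1, h2]
  · intro x
    exact ⟨mane_self hu₀ x, phiN_self_nonneg hu₀ x⟩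
  · intro x y
    exact phiN_eq_Tm hu₀ x y
end
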